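/- A flow f is a maximum flow (i.e. |g| ≤ |f| for every flow g) if and only if there is no augmenting path, i.e. the sink t is not residually reachable from the source s with respect to f. -/

import Mathlib

open Finset

variable {V : Type*} [Fintype V] [DecidableEq V]

/-- A flow on a network with capacities `c`, source `s` and sink `t`. -/
def IsFlow (c : V → V → ℝ) (s t : V) (f : V → V → ℝ) : Prop :=
  (∀ u v, f u v ≤ c u v) ∧ (∀ u v, f u v = - f v u) ∧
    ∀ v, v ≠ s → v ≠ t → ∑ u, f u v = 0

/-- The value of a flow: the net flow into the sink. -/
def flowValue (t : V) (f : V → V → ℝ) : ℝ := ∑ v, f v t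

/-- `b` is residually reachable from `a`: `(a, b)` lies in the
reflexive-transitive closure of the residual-edge relation `0 < c u v - f u v`. -/
def ResReach (c f : V → V → ℝ) (a b : V) : Prop :=
  Relation.ReflTransGen (fun u v => 0 < c u v - f u v) a b

/-- Any chain can be shortened to a duplicate-free chain with the same endpoints. -/
private lemma exists_nodup_chain_aux {α : Type*} {r : α → α → Prop} :
    ∀ (N : ℕ) (L : List α), L.length ≤ N → List.Chain' r L →
      ∃ L', List.Chain' r L' ∧ L'.Nodup ∧ L'.head? = L.head? ∧ L'.getLast? = L.getLast? := by
  intro N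
  induction N with
  | zero =>
    intro L hL _
    have : L = [] := List.length_eq_zero_iff.mp (Nat.le_zero.mp hL)
    subst this
    exact ⟨[], List.isChain_nil, by simp, rfl, rfl⟩
  | succ N ih =>
    intro L hL hc
    by_cases hnd : L.Nodup
    · exact ⟨L, hc, hnd, rfl, rfl⟩
    · obtain ⟨x, hx⟩ := List.exists_duplicate_iff_not_nodup.mpr hnd
      rw [List.duplicate_iff_sublist, List.cons_sublist_iff] at hx
      obtain ⟨r₁, r₂, hL12, hxr₁, hxr₂⟩ := hx
      obtain ⟨l₁, m, rfl⟩ := List.append_of_mem hxr₁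
      obtain ⟨l₂, l₃, rfl⟩ := List.append_of_mem (List.singleton_sublist.mp hxr₂)
      subst hL12
      have hc2 : List.Chain' r (l₁ ++ x :: l₃) := by
        have h1 : List.Chain' r (l₁ ++ x :: (m ++ l₂ ++ x :: l₃)) := by
          simpa [List.append_assoc] using hc
        rw [List.Chain', List.isChain_split] at h1
        have h2 := h1.2
        rw [show x :: (m ++ l₂ ++ x :: l₃) = (x :: (m ++ l₂)) ++ x :: l₃ by simp] at h2
        rw [List.isChain_split] at h2
        exact List.isChain_split.mpr ⟨h1.1, h2.2⟩
      have hlen : (l₁ ++ x :: l₃).length ≤ N := by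
        simp only [List.length_append, List.length_cons] at hL ⊢
        omega
      obtain ⟨L', a1, a2, a3, a4⟩ := ih _ hlen hc2
      refine ⟨L', a1, a2, ?_, ?_⟩
      · rw [a3]; cases l₁ <;> simp
      · rw [a4]
        simp [List.getLast?_append, List.getLast?_cons]

/-- From reflexive-transitive reachability between distinct points, extract an
injective path given as a function on `Fin (n+1)`. -/
private lemma exists_fin_path {α : Type*} {r : α → α → Prop} {s t : α} (hst : s ≠ t)
    (h : Relation.ReflTransGen r s t) :
    ∃ (n : ℕ) (p : Fin (n + 1) → α), Function.Injective p ∧ p 0 = s ∧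
      p (Fin.last n) = t ∧ 0 < n ∧ ∀ i : Fin n, r (p i.castSucc) (p i.succ) := by
  obtain ⟨l, hl, hlast⟩ := List.exists_isChain_cons_of_relationReflTransGen h
  have hc : List.Chain' r (s :: l) := hl
  obtain ⟨L', b1, b2, b3, b4⟩ := exists_nodup_chain_aux (s :: l).length (s :: l) le_rfl hc
  match L' with
  | [] => simp at b3
  | y :: M =>
    have hy : y = s := by simpa using b3
    subst hy
    have hlast' : (y :: M).getLast (by simp) = t := by
      have h1 : (y :: M).getLast? = some t := by
        rw [b4, List.getLast?_eq_getLast (by simp), hlast]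
      rw [List.getLast?_eq_getLast (by simp)] at h1
      exact Option.some_injective _ h1
    refine ⟨M.length, fun i => (y :: M).get i, ?_, rfl, ?_, ?_, ?_⟩
    · exact List.nodup_iff_injective_get.mp b2
    · show (y :: M).get ⟨M.length, by simp⟩ = t
      rw [← hlast']
      rw [List.getLast_eq_getElem]
      simp
    · rcases Nat.eq_zero_or_pos M.length with h0 | h0
      · exfalso
        have : M = [] := List.length_eq_zero_iff.mp h0
        subst this
        simp at hlast'
        exact hst hlast'
      · exact h0
    · intro i
      have := List.isChain_iff_getElem.mp b1 i.val (by simpa using i.isLt)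
      exact this

/-- A flow is maximum iff there is no augmenting path, i.e. the sink is not
residually reachable from the source. -/
theorem maxflow_iff_no_augpath (c : V → V → ℝ) (s t : V) (hst : s ≠ t)
    (hc : ∀ u v, 0 ≤ c u v) (f : V → V → ℝ) (hf : IsFlow c s t f) :
    (∀ g, IsFlow c s t g → flowValue t g ≤ flowValue t f) ↔
      ¬ ResReach c f s t := by
  obtain ⟨hfc, hfa, hfcons⟩ := hf
  have hres : ∀ u v, 0 ≤ c u v - f u v := fun u v => sub_nonneg.mpr (hfc u v)
  constructor
  · -- max → no augmenting path
    intro hmax hreach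
    obtain ⟨n, p, hpinj, hp0, hpl, hn, hpe⟩ := exists_fin_path hst hreach
    have hne : (Finset.univ : Finset (Fin n)).Nonempty := ⟨⟨0, hn⟩, Finset.mem_univ _⟩
    set ε := Finset.univ.inf' hne
      (fun i : Fin n => c (p i.castSucc) (p i.succ) - f (p i.castSucc) (p i.succ)) with hεdef
    have hε : 0 < ε := (Finset.lt_inf'_iff hne).mpr (fun i _ => hpe i)
    have hεle : ∀ i : Fin n, ε ≤ c (p i.castSucc) (p i.succ) - f (p i.castSucc) (p i.succ) :=
      fun i => Finset.inf'_le _ (Finset.mem_univ i)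
    set h : V → V → ℝ := fun u v => ∑ i : Fin n,
      ((if p i.castSucc = u ∧ p i.succ = v then ε else 0) -
       (if p i.castSucc = v ∧ p i.succ = u then ε else 0)) with hhdef
    -- capacity bound for the augmentation
    have hcap : ∀ u v, h u v ≤ c u v - f u v := by
      intro u v
      have h1 : h u v ≤ ∑ i : Fin n, (if p i.castSucc = u ∧ p i.succ = v then ε else 0) := by
        apply Finset.sum_le_sum
        intro i _
        have : (0:ℝ) ≤ (if p i.castSucc = v ∧ p i.succ = u then ε else 0) := by
          split_ifs
          exacts [hε.le, le_rfl]
        linarith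
      by_cases hex : ∃ i : Fin n, p i.castSucc = u ∧ p i.succ = v
      · obtain ⟨i₀, hi₀⟩ := hex
        have hsum : ∑ i : Fin n, (if p i.castSucc = u ∧ p i.succ = v then ε else 0) = ε := by
          rw [Finset.sum_eq_single i₀]
          · rw [if_pos hi₀]
          · intro i _ hi
            rw [if_neg]
            rintro ⟨h1', _⟩
            exact hi (Fin.castSucc_injective n (hpinj (h1'.trans hi₀.1.symm)))
          · intro hi
            exact absurd (Finset.mem_univ i₀) hi
        rw [hsum] at h1
        refine h1.trans ?_
        rw [← hi₀.1, ← hi₀.2]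
        exact hεle i₀
      · have hz : ∑ i : Fin n, (if p i.castSucc = u ∧ p i.succ = v then ε else 0) = 0 :=
          Finset.sum_eq_zero (fun i _ => if_neg (fun hh => hex ⟨i, hh⟩))
        rw [hz] at h1
        exact h1.trans (hres u v)
    -- antisymmetry
    have hanti : ∀ u v, h u v = - h v u := by
      intro u v
      show (∑ i : Fin n, _) = - (∑ i : Fin n, _)
      simp only [Finset.sum_sub_distrib]
      ring
    -- net flow into a vertex
    have hkey : ∀ v, ∑ u, h u v =
        (∑ i : Fin n, if p i.succ = v then ε else 0) -
        (∑ i : Fin n, if p i.castSucc = v then ε else 0) := by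
      intro v
      show (∑ u, ∑ i : Fin n, _) = _
      rw [Finset.sum_comm]
      simp only [Finset.sum_sub_distrib]
      congr 1
      · apply Finset.sum_congr rfl
        intro i _
        calc ∑ u, (if p i.castSucc = u ∧ p i.succ = v then ε else 0)
            = ∑ u, (if p i.castSucc = u then (if p i.succ = v then ε else 0) else 0) := by
              apply Finset.sum_congr rfl
              intro u _
              by_cases h1 : p i.castSucc = u <;> by_cases h2 : p i.succ = v <;> simp [h1, h2]
          _ = if p i.succ = v then ε else 0 := by
              rw [Finset.sum_ite_eq]
              simp
      · apply Finset.sum_congr rfl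
        intro i _
        calc ∑ u, (if p i.castSucc = v ∧ p i.succ = u then ε else 0)
            = ∑ u, (if p i.succ = u then (if p i.castSucc = v then ε else 0) else 0) := by
              apply Finset.sum_congr rfl
              intro u _
              by_cases h1 : p i.succ = u <;> by_cases h2 : p i.castSucc = v <;> simp [h1, h2]
          _ = if p i.castSucc = v then ε else 0 := by
              rw [Finset.sum_ite_eq]
              simp
    -- counting lemmas
    have hcount1 : ∀ j : Fin (n+1), j ≠ 0 →
        ∑ i : Fin n, (if p i.succ = p j then ε else 0) = ε := by
      intro j hj
      have hj1 : 1 ≤ j.val := by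
        rcases Nat.eq_zero_or_pos j.val with h0 | h0
        · exact absurd (Fin.ext h0) hj
        · exact h0
      have hj2 : j.val - 1 < n := by omega
      set i₀ : Fin n := ⟨j.val - 1, hj2⟩ with hi₀def
      have hsucc : i₀.succ = j := by
        apply Fin.ext
        simp [hi₀def]
        omega
      rw [Finset.sum_eq_single i₀]
      · rw [if_pos (by rw [hsucc])]
      · intro i _ hi
        rw [if_neg]
        intro hh
        exact hi (Fin.succ_injective n (hpinj (hh.trans (congrArg p hsucc.symm))))
      · intro hi
        exact absurd (Finset.mem_univ i₀) hi
    have hcount2 : ∑ i : Fin n, (if p i.succ = p 0 then ε else 0) = 0 := by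
      apply Finset.sum_eq_zero
      intro i _
      rw [if_neg]
      intro hh
      exact Fin.succ_ne_zero i (hpinj hh)
    have hcount3 : ∀ j : Fin (n+1), j ≠ Fin.last n →
        ∑ i : Fin n, (if p i.castSucc = p j then ε else 0) = ε := by
      intro j hj
      have hj2 : j.val < n := by
        have := j.isLt
        rcases Nat.lt_or_ge j.val n with h0 | h0
        · exact h0
        · exact absurd (Fin.ext (by simp [Fin.val_last]; omega)) hj
      set i₀ : Fin n := ⟨j.val, hj2⟩ with hi₀def
      have hcs : i₀.castSucc = j := by
        apply Fin.ext
        simp [hi₀def]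
      rw [Finset.sum_eq_single i₀]
      · rw [if_pos (by rw [hcs])]
      · intro i _ hi
        rw [if_neg]
        intro hh
        exact hi (Fin.castSucc_injective n (hpinj (hh.trans (congrArg p hcs.symm))))
      · intro hi
        exact absurd (Finset.mem_univ i₀) hi
    have hcount4 : ∑ i : Fin n, (if p i.castSucc = p (Fin.last n) then ε else 0) = 0 := by
      apply Finset.sum_eq_zero
      intro i _
      rw [if_neg]
      intro hh
      exact absurd (hpinj hh) (Fin.ne_of_lt (Fin.castSucc_lt_last i))
    -- conservation of the augmentation
    have hconsv : ∀ v, v ≠ s → v ≠ t → ∑ u, h u v = 0 := by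
      intro v hvs hvt
      by_cases hv : ∃ j, p j = v
      · obtain ⟨j, rfl⟩ := hv
        have hj0 : j ≠ 0 := by
          intro e
          exact hvs (by rw [e, hp0])
        have hjl : j ≠ Fin.last n := by
          intro e
          exact hvt (by rw [e, hpl])
        rw [hkey, hcount1 j hj0, hcount3 j hjl]
        ring
      · push_neg at hv
        rw [hkey]
        rw [Finset.sum_eq_zero (fun i _ => if_neg (hv i.succ)),
          Finset.sum_eq_zero (fun i _ => if_neg (hv i.castSucc))]
        ring
    -- value of the augmentation at the sink
    have hval : ∑ u, h u t = ε := by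
      have hl0 : (Fin.last n) ≠ (0 : Fin (n+1)) := by
        intro e
        have := congrArg Fin.val e
        simp [Fin.val_last] at this
        omega
      rw [← hpl, hkey, hcount1 _ hl0, hcount4]
      ring
    -- the augmented flow
    set g : V → V → ℝ := fun u v => f u v + h u v with hgdef
    have hg : IsFlow c s t g := by
      refine ⟨fun u v => ?_, fun u v => ?_, fun v hvs hvt => ?_⟩
      · have := hcap u v
        show f u v + h u v ≤ c u v
        linarith
      · show f u v + h u v = -(f v u + h v u)
        have h1 := hfa u v
        have h2 := hanti u v
        linarith
      · show ∑ u, (f u v + h u v) = 0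
        rw [Finset.sum_add_distrib, hfcons v hvs hvt, hconsv v hvs hvt]
        ring
    have hvg : flowValue t g = flowValue t f + ε := by
      show ∑ v, (f v t + h v t) = (∑ v, f v t) + ε
      rw [Finset.sum_add_distrib, hval]
    have := hmax g hg
    rw [hvg] at this
    linarith
  · -- no augmenting path → max
    intro hnr g hg
    obtain ⟨hgc, hga, hgcons⟩ := hg
    classical
    set S : Finset V := Finset.univ.filter (fun v => ResReach c f s v) with hSdef
    have hsS : s ∈ S := by
      simp only [hSdef, Finset.mem_filter, Finset.mem_univ, true_and]
      exact Relation.ReflTransGen.refl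
    have htS : t ∉ S := by
      simp only [hSdef, Finset.mem_filter, Finset.mem_univ, true_and]
      exact hnr
    have hedge : ∀ u ∈ S, ∀ v, v ∉ S → f u v = c u v := by
      intro u hu v hv
      have h1 : ¬ (0 < c u v - f u v) := by
        intro hlt
        apply hv
        simp only [hSdef, Finset.mem_filter, Finset.mem_univ, true_and] at hu ⊢
        exact hu.tail hlt
      exact le_antisymm (hfc u v) (by linarith)
    have cutval : ∀ (e : V → V → ℝ), (∀ u v, e u v = - e v u) →
        (∀ v, v ≠ s → v ≠ t → ∑ u, e u v = 0) →
        flowValue t e = ∑ u ∈ S, ∑ v ∈ Sᶜ, e u v := by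
      intro e hea hecons
      have diag : ∑ u ∈ S, ∑ v ∈ S, e u v = 0 := by
        have h1 : ∑ u ∈ S, ∑ v ∈ S, e u v = ∑ u ∈ S, ∑ v ∈ S, e v u := Finset.sum_comm
        have h2 : ∑ u ∈ S, ∑ v ∈ S, e v u = - ∑ u ∈ S, ∑ v ∈ S, e u v := by
          calc ∑ u ∈ S, ∑ v ∈ S, e v u = ∑ u ∈ S, ∑ v ∈ S, -(e u v) := by
                apply Finset.sum_congr rfl
                intro u _
                apply Finset.sum_congr rfl
                intro v _
                rw [hea v u]
            _ = - ∑ u ∈ S, ∑ v ∈ S, e u v := by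
                simp [Finset.sum_neg_distrib]
        linarith
      have hsv : ∑ v, e s v = flowValue t e := by
        have tot : ∑ u, ∑ v, e v u = 0 := by
          have h1 : ∑ u, ∑ v, e v u = ∑ u, ∑ v, e u v := Finset.sum_comm
          have h2 : ∑ u, ∑ v, e u v = - ∑ u, ∑ v, e v u := by
            calc ∑ u, ∑ v, e u v = ∑ u, ∑ v, -(e v u) := by
                  apply Finset.sum_congr rfl
                  intro u _
                  apply Finset.sum_congr rfl
                  intro v _
                  rw [hea u v]
              _ = - ∑ u, ∑ v, e v u := by
                  simp [Finset.sum_neg_distrib]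
          linarith
        have hsub : ∑ u, ∑ v, e v u = ∑ u ∈ ({s, t} : Finset V), ∑ v, e v u := by
          symm
          apply Finset.sum_subset (Finset.subset_univ _)
          intro u _ hu
          simp only [Finset.mem_insert, Finset.mem_singleton] at hu
          push_neg at hu
          exact hecons u hu.1 hu.2
        rw [hsub, Finset.sum_pair hst] at tot
        have hanti2 : ∑ v, e v s = - ∑ v, e s v := by
          calc ∑ v, e v s = ∑ v, -(e s v) := by
                apply Finset.sum_congr rfl
                intro v _
                rw [hea v s]
            _ = - ∑ v, e s v := by simp [Finset.sum_neg_distrib]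
        unfold flowValue
        linarith
      have hterm : ∀ u ∈ S, (∑ v, e u v) = if u = s then flowValue t e else 0 := by
        intro u hu
        by_cases hus : u = s
        · subst hus
          simp [hsv]
        · have hut : u ≠ t := fun e' => htS (e' ▸ hu)
          have hz : ∑ v, e v u = 0 := hecons u hus hut
          have : ∑ v, e u v = - ∑ v, e v u := by
            calc ∑ v, e u v = ∑ v, -(e v u) := by
                  apply Finset.sum_congr rfl
                  intro v _
                  rw [hea u v]
              _ = - ∑ v, e v u := by simp [Finset.sum_neg_distrib]
          rw [if_neg hus, this, hz]
          ring
      have lhs : ∑ u ∈ S, ∑ v, e u v = flowValue t e := by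
        rw [Finset.sum_congr rfl hterm, Finset.sum_ite_eq' S s (fun _ => flowValue t e),
          if_pos hsS]
      have split : ∑ u ∈ S, ∑ v, e u v =
          ∑ u ∈ S, ∑ v ∈ S, e u v + ∑ u ∈ S, ∑ v ∈ Sᶜ, e u v := by
        rw [← Finset.sum_add_distrib]
        apply Finset.sum_congr rfl
        intro u _
        exact (Finset.sum_add_sum_compl S _).symm
      rw [lhs, diag] at split
      linarith
    rw [cutval g hga hgcons, cutval f hfa hfcons]
    apply Finset.sum_le_sum
    intro u hu
    apply Finset.sum_le_sum
    intro v hv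
    rw [hedge u hu v (Finset.mem_compl.mp hv)]
    exact hgc u v
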